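/- Domain substitution preserves accessibility: if Ω, ω1 ≺ α, Ω' ⊢ ω ≺* ω' and Ω ⊢ ω1 ≺ ω2, where α is a domain variable not occurring in Ω or ω1, then Ω, Ω'{ω2/α} ⊢ ω{ω2/α} ≺* ω'{ω2/α}. -/
import Mathlib


/-- Domains: constants or variables. -/
inductive Dom where
  | const : String → Dom
  | var : String → Dom
deriving DecidableEq

/-- The reflexive-transitive accessibility judgment Ω ⊢ ω1 ≺* ω2,
where the direct judgment Ω ⊢ ω1 ≺ ω2 holds iff (ω1, ω2) ∈ Ω. -/
inductive AccStar (Ω : Finset (Dom × Dom)) : Dom → Dom → Prop where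
  | refl (w : Dom) : AccStar Ω w w
  | step {w1 w2 w3 : Dom} : (w1, w2) ∈ Ω → AccStar Ω w2 w3 → AccStar Ω w1 w3

/-- Substitution {ω2/α} on domains: replace the variable α by ω2. -/
def substDom (α : String) (ω2 : Dom) (d : Dom) : Dom :=
  if d = Dom.var α then ω2 else d

/-- The variable α occurs in the accessibility context Ω. -/
def OccursIn (α : String) (Ω : Finset (Dom × Dom)) : Prop :=
  ∃ p ∈ Ω, p.1 = Dom.var α ∨ p.2 = Dom.var α

/-- domain substitution preserves accessibility:
if Ω, ω1 ≺ α, Ω' ⊢ ω ≺* ω' and Ω ⊢ ω1 ≺ ω2, with α not occurring in Ω or ω1,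
then Ω, Ω'{ω2/α} ⊢ ω{ω2/α} ≺* ω'{ω2/α}. -/
theorem accStar_subst (Ω Ω' : Finset (Dom × Dom)) (ω1 ω2 ω ω' : Dom) (α : String)
    (hα1 : ¬ OccursIn α Ω) (hα2 : ω1 ≠ Dom.var α)
    (h : AccStar (Ω ∪ insert (ω1, Dom.var α) Ω') ω ω')
    (hdir : (ω1, ω2) ∈ Ω) :
    AccStar (Ω ∪ Ω'.image (fun p => (substDom α ω2 p.1, substDom α ω2 p.2)))
      (substDom α ω2 ω) (substDom α ω2 ω') := by
  induction h with
  | refl w => exact AccStar.refl _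
  | @step w1 w2 w3 hmem _ ih =>
    refine AccStar.step ?_ ih
    rcases Finset.mem_union.1 hmem with hΩ | hins
    · have h1 : w1 ≠ Dom.var α := fun e => hα1 ⟨(w1, w2), hΩ, Or.inl e⟩
      have h2 : w2 ≠ Dom.var α := fun e => hα1 ⟨(w1, w2), hΩ, Or.inr e⟩
      simp only [substDom, if_neg h1, if_neg h2]
      exact Finset.mem_union_left _ hΩ
    · rcases Finset.mem_insert.1 hins with heq | hΩ'
      · obtain ⟨e1, e2⟩ := Prod.mk.injEq .. ▸ heq
        subst e1; subst e2
        simp only [substDom, if_neg hα2, if_pos rfl]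
        exact Finset.mem_union_left _ hdir
      · exact Finset.mem_union_right _ (Finset.mem_image_of_mem _ hΩ')
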